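/- Let ρ, σ be positive semidefinite matrices with σ invertible and T a completely positive trace-preserving map with T(σ) invertible. If ρ^2 = σ T*(T(σ)^{-1} T(ρ)^2 T(σ)^{-1}) σ, then tr[ρ^2 σ^{-1}] = tr[T(ρ)^2 T(σ)^{-1}]. -/
import Mathlib


open Matrix BigOperators
open scoped Kronecker ComplexOrder

noncomputable section

namespace BSQMC

variable {H K : Type*} [Fintype H] [DecidableEq H] [Fintype K] [DecidableEq K]

/-- The `n`-fold amplification `id_n ⊗ T` of a linear map on matrices. -/
def amplify (nn : ℕ) (T : Matrix H H ℂ →ₗ[ℂ] Matrix K K ℂ)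
    (M : Matrix (Fin nn × H) (Fin nn × H) ℂ) : Matrix (Fin nn × K) (Fin nn × K) ℂ :=
  Matrix.of fun p q => T (Matrix.of fun h h' => M (p.1, h) (q.1, h')) p.2 q.2

/-- Complete positivity of a linear map on matrices. -/
def IsCompletelyPositive (T : Matrix H H ℂ →ₗ[ℂ] Matrix K K ℂ) : Prop :=
  ∀ (nn : ℕ) (M : Matrix (Fin nn × H) (Fin nn × H) ℂ),
    M.PosSemidef → (amplify nn T M).PosSemidef

/-- Trace preservation. -/
def IsTracePreserving (T : Matrix H H ℂ →ₗ[ℂ] Matrix K K ℂ) : Prop :=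
  ∀ M : Matrix H H ℂ, (T M).trace = M.trace

/-- `S` is the Hilbert-Schmidt adjoint of `T`. -/
def IsAdjointPair (T : Matrix H H ℂ →ₗ[ℂ] Matrix K K ℂ)
    (S : Matrix K K ℂ →ₗ[ℂ] Matrix H H ℂ) : Prop :=
  ∀ (X : Matrix H H ℂ) (Y : Matrix K K ℂ), (S Y * X).trace = (Y * T X).trace

theorem symmetric_recovery_implies_trace_identity
    (T : Matrix H H ℂ →ₗ[ℂ] Matrix K K ℂ) (Tad : Matrix K K ℂ →ₗ[ℂ] Matrix H H ℂ)
    (hCP : IsCompletelyPositive T) (hTP : IsTracePreserving T)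
    (hadj : IsAdjointPair T Tad)
    (ρ σ : Matrix H H ℂ)
    (hρ : ρ.PosSemidef) (hσ : σ.PosDef) (hTσ : (T σ).PosDef)
    (hrec : ρ * ρ = σ * Tad ((T σ)⁻¹ * (T ρ * T ρ) * (T σ)⁻¹) * σ) :
    (ρ * ρ * σ⁻¹).trace = (T ρ * T ρ * (T σ)⁻¹).trace := by
  set X := (T σ)⁻¹ * (T ρ * T ρ) * (T σ)⁻¹ with hX
  have hσinv : σ * σ⁻¹ = 1 := Matrix.mul_nonsing_inv σ hσ.det_pos.ne'.isUnit
  have hTσinv : (T σ) * (T σ)⁻¹ = 1 := Matrix.mul_nonsing_inv (T σ) hTσ.det_pos.ne'.isUnit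
  have h1 : ρ * ρ * σ⁻¹ = σ * Tad X := by
    rw [hrec, mul_assoc, hσinv, mul_one]
  rw [h1, Matrix.trace_mul_comm, hadj σ X, hX, Matrix.trace_mul_comm,
    ← mul_assoc, ← mul_assoc, hTσinv, one_mul, Matrix.trace_mul_comm]

end BSQMC
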